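/- arXiv:1905.04773 — 2 statements merged into one kernel-verified Lean document; each statement's English description precedes it below -/
import Mathlib

section
/- Let f : [a, b] → ℝ be a monotone (antitone) continuous function. For every ε > 0 there exists a finite 'staircase' polygonal curve, consisting of alternating horizontal and vertical segments whose corner points all lie on the graph of f, such that the Hausdorff distance between this polygonal curve and the graph of f is at most ε. -/
open Real

/-- A point of the Euclidean plane with given coordinates. -/
noncomputable def pt (x y : ℝ) : EuclideanSpace ℝ (Fin 2) :=
  (WithLp.equiv 2 (Fin 2 → ℝ)).symm ![x, y]

/-- The staircase polygonal curve through the points `(t i, f (t i))`: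
alternating horizontal and vertical segments. -/
noncomputable def staircase (n : ℕ) (t : Fin (n + 1) → ℝ) (f : ℝ → ℝ) :
    Set (EuclideanSpace ℝ (Fin 2)) :=
  (⋃ i : Fin n, segment ℝ (pt (t i.castSucc) (f (t i.castSucc)))
      (pt (t i.succ) (f (t i.castSucc)))) ∪
  (⋃ i : Fin n, segment ℝ (pt (t i.succ) (f (t i.castSucc)))
      (pt (t i.succ) (f (t i.succ))))

lemma pt_combo (u v x1 y1 x2 y2 : ℝ) :
    u • pt x1 y1 + v • pt x2 y2 = pt (u*x1+v*x2) (u*y1+v*y2) := by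
  ext i; fin_cases i <;> simp [pt]

lemma dist_pt (x1 y1 x2 y2 : ℝ) :
    dist (pt x1 y1) (pt x2 y2) = Real.sqrt ((x1-x2)^2 + (y1-y2)^2) := by
  rw [EuclideanSpace.dist_eq, Fin.sum_univ_two]
  simp [pt, Real.dist_eq, sq_abs]

lemma dist_pt_h (x1 x2 y : ℝ) : dist (pt x1 y) (pt x2 y) = |x1 - x2| := by
  rw [dist_pt]; simp [Real.sqrt_sq_eq_abs]

lemma dist_pt_v (x y1 y2 : ℝ) : dist (pt x y1) (pt x y2) = |y1 - y2| := by
  rw [dist_pt]; simp [Real.sqrt_sq_eq_abs]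

lemma seg_h {x1 x2 y : ℝ} {p} (hp : p ∈ segment ℝ (pt x1 y) (pt x2 y)) :
    ∃ x ∈ segment ℝ x1 x2, p = pt x y := by
  obtain ⟨u, v, hu, hv, huv, rfl⟩ := hp
  refine ⟨u*x1 + v*x2, ⟨u, v, hu, hv, huv, rfl⟩, ?_⟩
  rw [pt_combo, show u*y+v*y = y by rw [← add_mul, huv, one_mul]]

lemma seg_v {x y1 y2 : ℝ} {p} (hp : p ∈ segment ℝ (pt x y1) (pt x y2)) :
    ∃ y ∈ segment ℝ y1 y2, p = pt x y := by
  obtain ⟨u, v, hu, hv, huv, rfl⟩ := hp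
  refine ⟨u*y1 + v*y2, ⟨u, v, hu, hv, huv, rfl⟩, ?_⟩
  rw [pt_combo, show u*x+v*x = x by rw [← add_mul, huv, one_mul]]

lemma mem_seg_h {x1 x2 y x : ℝ} (hx : x ∈ segment ℝ x1 x2) :
    pt x y ∈ segment ℝ (pt x1 y) (pt x2 y) := by
  obtain ⟨u, v, hu, hv, huv, rfl⟩ := hx
  refine ⟨u, v, hu, hv, huv, ?_⟩
  rw [pt_combo, show u*y+v*y = y by rw [← add_mul, huv, one_mul]]
  simp [smul_eq_mul]

theorem staircase_approximation_of_antitone_continuous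
    (a b : ℝ) (hab : a < b) (f : ℝ → ℝ)
    (hf : AntitoneOn f (Set.Icc a b))
    (hc : ContinuousOn f (Set.Icc a b)) :
    ∀ ε > 0, ∃ (n : ℕ) (t : Fin (n + 1) → ℝ), 0 < n ∧ StrictMono t ∧
      t 0 = a ∧ t (Fin.last n) = b ∧
      Metric.hausdorffDist (staircase n t f)
        ((fun x => pt x (f x)) '' Set.Icc a b) ≤ ε := by
  intro ε hε
  have huc : UniformContinuousOn f (Set.Icc a b) :=
    isCompact_Icc.uniformContinuousOn_of_continuous hc
  obtain ⟨δ, hδ, hδf⟩ := Metric.uniformContinuousOn_iff.mp huc ε hε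
  set m := min δ ε with hm_def
  have hm : 0 < m := lt_min hδ hε
  obtain ⟨n, hn⟩ := exists_nat_gt ((b - a) / m)
  have hn0R : (0 : ℝ) < n := lt_trans (div_pos (by linarith) hm) hn
  have hn0 : 0 < n := by exact_mod_cast hn0R
  set h := (b - a) / n with hh_def
  have hh : 0 < h := div_pos (by linarith) hn0R
  have hhm : h < m := by
    have h1 : b - a < n * m := by rwa [div_lt_iff₀ hm] at hn
    rw [hh_def, div_lt_iff₀ hn0R]
    nlinarith
  have hhδ : h < δ := lt_of_lt_of_le hhm (min_le_left _ _)
  have hhε : h ≤ ε := le_of_lt (lt_of_lt_of_le hhm (min_le_right _ _))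
  refine ⟨n, fun i => a + i.val * h, hn0, ?_, by simp, ?_, ?_⟩
  · intro i j hij
    have : (i.val : ℝ) < j.val := by exact_mod_cast hij
    dsimp only
    nlinarith
  · simp only [Fin.val_last]
    rw [hh_def]
    field_simp
    ring
  · -- main Hausdorff bound
    set t : Fin (n+1) → ℝ := fun i => a + i.val * h with ht_def
    have tmem : ∀ i : Fin (n+1), t i ∈ Set.Icc a b := by
      intro i
      have hi : (i.val : ℝ) ≤ n := by exact_mod_cast Nat.le_of_lt_succ i.isLt
      constructor
      · simp only [ht_def]; nlinarith
      · simp only [ht_def]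
        have : (i.val : ℝ) * h ≤ n * h := by nlinarith
        have hnh : (n : ℝ) * h = b - a := by rw [hh_def]; field_simp
        linarith
    have tstep : ∀ i : Fin n, t i.succ - t i.castSucc = h := by
      intro i
      simp only [ht_def, Fin.val_succ, Fin.coe_castSucc]
      push_cast
      ring
    have tle : ∀ i : Fin n, t i.castSucc ≤ t i.succ := by
      intro i; have := tstep i; linarith [hh.le]
    -- distance from f-values over one interval
    have oscbd : ∀ (u v : ℝ), u ∈ Set.Icc a b → v ∈ Set.Icc a b →
        |u - v| ≤ h → dist (f u) (f v) ≤ ε := by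
      intro u v hu hv huv
      exact le_of_lt (hδf u hu v hv (by rw [Real.dist_eq]; linarith))
    apply Metric.hausdorffDist_le_of_mem_dist hε.le
    · -- staircase → graph
      intro p hp
      rcases hp with hp | hp
      · -- horizontal
        obtain ⟨i, hpi⟩ := Set.mem_iUnion.mp hp
        obtain ⟨x, hx, rfl⟩ := seg_h hpi
        rw [segment_eq_Icc (tle i)] at hx
        have hxab : x ∈ Set.Icc a b :=
          ⟨le_trans (tmem i.castSucc).1 hx.1, le_trans hx.2 (tmem i.succ).2⟩
        refine ⟨pt x (f x), ⟨x, hxab, rfl⟩, ?_⟩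
        rw [dist_pt_v]
        have : dist (f (t i.castSucc)) (f x) ≤ ε := by
          apply oscbd _ _ (tmem _) hxab
          rw [abs_sub_comm, abs_le]
          have := tstep i
          constructor <;> linarith [hx.1, hx.2, hh.le]
        rwa [Real.dist_eq] at this
      · -- vertical
        obtain ⟨i, hpi⟩ := Set.mem_iUnion.mp hp
        obtain ⟨y, hy, rfl⟩ := seg_v hpi
        have hmono : f (t i.succ) ≤ f (t i.castSucc) :=
          hf (tmem _) (tmem _) (tle i)
        rw [segment_symm, segment_eq_Icc hmono] at hy
        have hsub : Set.Icc (f (t i.succ)) (f (t i.castSucc)) ⊆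
            f '' Set.Icc (t i.castSucc) (t i.succ) :=
          intermediate_value_Icc' (tle i)
            (hc.mono (Set.Icc_subset_Icc (tmem i.castSucc).1 (tmem i.succ).2))
        obtain ⟨x, hxI, hfx⟩ := hsub hy
        have hxab : x ∈ Set.Icc a b :=
          ⟨le_trans (tmem i.castSucc).1 hxI.1, le_trans hxI.2 (tmem i.succ).2⟩
        refine ⟨pt x (f x), ⟨x, hxab, rfl⟩, ?_⟩
        rw [hfx, dist_pt_h]
        have := tstep i
        rw [abs_le]
        constructor <;> [linarith [hxI.2]; linarith [hxI.1]]
    · -- graph → staircase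
      rintro q ⟨x, hxab, rfl⟩
      set k : ℕ := min ⌊(x - a) / h⌋₊ (n - 1) with hk_def
      have hkn : k < n := by
        have : k ≤ n - 1 := min_le_right _ _
        omega
      set i : Fin n := ⟨k, hkn⟩ with hi_def
      have hfl : (k : ℝ) ≤ (x - a) / h := by
        have h1 : (k : ℝ) ≤ (⌊(x - a) / h⌋₊ : ℝ) := by
          exact_mod_cast min_le_left _ _
        have h2 : (⌊(x - a) / h⌋₊ : ℝ) ≤ (x - a) / h :=
          Nat.floor_le (div_nonneg (by linarith [hxab.1]) hh.le)
        linarith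
      have hlow : t i.castSucc ≤ x := by
        have : (k : ℝ) * h ≤ x - a := (le_div_iff₀ hh).mp hfl
        simp only [ht_def, Fin.coe_castSucc, hi_def]
        linarith
      have hhigh : x ≤ t i.succ := by
        simp only [ht_def, Fin.val_succ, hi_def]
        rcases le_or_gt (⌊(x - a) / h⌋₊) (n - 1) with hcase | hcase
        · have hk_eq : k = ⌊(x - a) / h⌋₊ := min_eq_left hcase
          have : (x - a) / h < (⌊(x - a) / h⌋₊ : ℝ) + 1 := Nat.lt_floor_add_one _
          have hxa : x - a < ((k : ℝ) + 1) * h := by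
            rw [hk_eq]
            calc x - a = ((x - a)/h) * h := by field_simp
            _ < ((⌊(x - a) / h⌋₊ : ℝ) + 1) * h := by nlinarith
          push_cast
          linarith
        · have hk_eq : k = n - 1 := min_eq_right hcase.le
          have : (k : ℝ) + 1 = n := by
            rw [hk_eq]; push_cast [Nat.cast_sub (by omega : 1 ≤ n)]; ring
          have hnh : (n : ℝ) * h = b - a := by rw [hh_def]; field_simp
          push_cast
          rw [this]
          linarith [hxab.2]
      refine ⟨pt x (f (t i.castSucc)), Or.inl (Set.mem_iUnion.mpr ⟨i, ?_⟩), ?_⟩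
      · exact mem_seg_h (by rw [segment_eq_Icc (tle i)]; exact ⟨hlow, hhigh⟩)
      · rw [dist_pt_v]
        have : dist (f x) (f (t i.castSucc)) ≤ ε := by
          apply oscbd _ _ hxab (tmem _)
          rw [abs_le]
          have := tstep i
          constructor <;> [linarith; linarith]
        rwa [Real.dist_eq] at this
end

section
/- Let f : [a,b] → ℝ be monotone decreasing (antitone). Then for any partition a = t_0 < t_1 < … < t_n = b with mesh δ, the Hausdorff distance between the graph of f and the staircase curve through the points (t_i, f(t_i)) is at most δ + (f(a) − f(b)) (and more precisely at most δ + max_i (f(t_i) − f(t_{i+1}))). -/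
open Real

lemma pt_smul_add (c d x1 y1 x2 y2 : ℝ) :
    c • pt x1 y1 + d • pt x2 y2 = pt (c*x1+d*x2) (c*y1+d*y2) := by
  unfold pt
  ext i
  fin_cases i <;> simp

lemma dist_pt_s5 (x y x' y' : ℝ) :
    dist (pt x y) (pt x' y') = Real.sqrt ((x-x')^2 + (y-y')^2) := by
  unfold pt
  rw [EuclideanSpace.dist_eq]
  norm_num [Fin.sum_univ_two, Real.dist_eq, sq_abs]

lemma dist_pt_vert (x y y' : ℝ) : dist (pt x y) (pt x y') = |y - y'| := by
  rw [dist_pt_s5]; simp [Real.sqrt_sq_eq_abs]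

lemma dist_pt_horiz (x x' y : ℝ) : dist (pt x y) (pt x' y) = |x - x'| := by
  rw [dist_pt_s5]; simp [Real.sqrt_sq_eq_abs]

lemma mem_segment_horiz {x1 x2 x : ℝ} (y : ℝ) (h1 : x1 ≤ x) (h2 : x ≤ x2) :
    pt x y ∈ segment ℝ (pt x1 y) (pt x2 y) := by
  have hx : x ∈ segment ℝ x1 x2 := by
    rw [segment_eq_Icc (h1.trans h2)]; exact ⟨h1, h2⟩
  obtain ⟨c, d, hc, hd, hcd, hx⟩ := hx
  refine ⟨c, d, hc, hd, hcd, ?_⟩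
  rw [pt_smul_add]
  simp only [smul_eq_mul] at hx
  have hy : c*y+d*y = y := by linear_combination y * hcd
  rw [hx, hy]

lemma convex_bounds {c d x1 x2 : ℝ} (hc : 0 ≤ c) (hd : 0 ≤ d) (hcd : c + d = 1)
    (h : x1 ≤ x2) : x1 ≤ c*x1 + d*x2 ∧ c*x1 + d*x2 ≤ x2 := by
  have e : c*x1 + d*x2 = x1 + d*(x2-x1) := by linear_combination x1 * hcd
  constructor
  · rw [e]; linarith [mul_nonneg hd (sub_nonneg.mpr h)]
  · rw [e]; linarith [mul_le_of_le_one_left (sub_nonneg.mpr h) (by linarith : d ≤ 1)]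

lemma key (a b : ℝ) (hab : a < b) (f : ℝ → ℝ) (hf : AntitoneOn f (Set.Icc a b))
    (n : ℕ) (hn : 0 < n) (t : Fin (n + 1) → ℝ) (ht : StrictMono t)
    (h0 : t 0 = a) (hl : t (Fin.last n) = b)
    (δ : ℝ) (hδ : ∀ i : Fin n, t i.succ - t i.castSucc ≤ δ)
    (M : ℝ) (hM : ∀ i : Fin n, f (t i.castSucc) - f (t i.succ) ≤ M) :
    Metric.hausdorffDist ((fun x => pt x (f x)) '' Set.Icc a b) (staircase n t f) ≤ δ + M := by
  classical
  have hmem : ∀ j : Fin (n+1), t j ∈ Set.Icc a b := fun j =>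
    ⟨h0 ▸ ht.monotone (Fin.zero_le j), hl ▸ ht.monotone (Fin.le_last j)⟩
  set i0 : Fin n := ⟨0, hn⟩ with hi0
  have hδ0 : 0 < δ := lt_of_lt_of_le (by linarith [ht (Fin.castSucc_lt_succ (i := i0))]) (hδ i0)
  have hM0 : 0 ≤ M := by
    have := hf (hmem i0.castSucc) (hmem i0.succ) (ht (Fin.castSucc_lt_succ (i := i0))).le
    linarith [hM i0]
  have find : ∀ x ∈ Set.Icc a b, ∃ i : Fin n, t i.castSucc ≤ x ∧ x ≤ t i.succ := by
    intro x hx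
    set P : ℕ → Prop := fun k => ∃ h : k < n + 1, t ⟨k, h⟩ ≤ x with hP
    have hP0 : P 0 := ⟨Nat.succ_pos n, by
      have : (⟨0, Nat.succ_pos n⟩ : Fin (n+1)) = 0 := rfl
      rw [this, h0]; exact hx.1⟩
    set k := Nat.findGreatest P n with hk
    have hkn : k ≤ n := Nat.findGreatest_le n
    obtain ⟨hk1, hk2⟩ : P k := Nat.findGreatest_spec (Nat.zero_le n) hP0
    by_cases hcase : k < n
    · refine ⟨⟨k, hcase⟩, hk2, ?_⟩
      by_contra hlt
      push_neg at hlt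
      have hPk1 : P (k+1) := ⟨Nat.succ_lt_succ hcase, hlt.le⟩
      exact Nat.findGreatest_is_greatest (Nat.lt_succ_self k) (Nat.succ_le_of_lt hcase) hPk1
    · have hkn' : k = n := le_antisymm hkn (not_lt.mp hcase)
      have hb : t ⟨k, hk1⟩ = b := by
        rw [show (⟨k, hk1⟩ : Fin (n+1)) = Fin.last n from Fin.ext hkn', hl]
      have hxb : x = b := le_antisymm hx.2 (hb ▸ hk2)
      refine ⟨⟨n-1, Nat.sub_lt hn one_pos⟩, ?_, ?_⟩
      · have : ((⟨n-1, Nat.sub_lt hn one_pos⟩ : Fin n).castSucc : Fin (n+1)) ≤ Fin.last n :=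
          Fin.le_last _
        calc t _ ≤ t (Fin.last n) := ht.monotone this
          _ = b := hl
          _ = x := hxb.symm
      · have hsucc : ((⟨n-1, Nat.sub_lt hn one_pos⟩ : Fin n).succ : Fin (n+1)) = Fin.last n :=
          Fin.ext (by simp [Fin.last]; omega)
        rw [hsucc, hl, hxb]

  apply Metric.hausdorffDist_le_of_mem_dist (by linarith)
  · rintro _ ⟨x, hx, rfl⟩
    obtain ⟨i, h1, h2⟩ := find x hx
    refine ⟨pt x (f (t i.castSucc)),
      Or.inl (Set.mem_iUnion.mpr ⟨i, mem_segment_horiz _ h1 h2⟩), ?_⟩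
    rw [dist_pt_vert]
    have ha1 : f x ≤ f (t i.castSucc) := hf (hmem _) hx h1
    have ha2 : f (t i.succ) ≤ f x := hf hx (hmem _) h2
    rw [abs_of_nonpos (by linarith)]
    linarith [hM i]
  · rintro z (hz | hz) <;> rw [Set.mem_iUnion] at hz <;>
      obtain ⟨i, c, d, hc, hd, hcd, rfl⟩ := hz <;> rw [pt_smul_add]
    · refine ⟨pt (t i.castSucc) (f (t i.castSucc)), ⟨t i.castSucc, hmem _, rfl⟩, ?_⟩
      have hy : c * f (t i.castSucc) + d * f (t i.castSucc) = f (t i.castSucc) := by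
        linear_combination f (t i.castSucc) * hcd
      rw [hy, dist_pt_horiz]
      have h12 : t i.castSucc < t i.succ := ht (Fin.castSucc_lt_succ (i := i))
      obtain ⟨u, v⟩ := convex_bounds hc hd hcd h12.le
      rw [abs_of_nonneg (by linarith)]
      linarith [hδ i]
    · refine ⟨pt (t i.succ) (f (t i.succ)), ⟨t i.succ, hmem _, rfl⟩, ?_⟩
      have hy : c * t i.succ + d * t i.succ = t i.succ := by
        linear_combination t i.succ * hcd
      rw [hy, dist_pt_vert]
      have h12 : f (t i.succ) ≤ f (t i.castSucc) :=
        hf (hmem _) (hmem _) (ht (Fin.castSucc_lt_succ (i := i))).le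
      obtain ⟨u, v⟩ := convex_bounds hd hc (by linarith) h12
      rw [abs_of_nonneg (by linarith)]
      linarith [hM i]

theorem staircase_hausdorff_bound
    (a b : ℝ) (hab : a < b) (f : ℝ → ℝ) (hf : AntitoneOn f (Set.Icc a b))
    (n : ℕ) (hn : 0 < n) (t : Fin (n + 1) → ℝ) (ht : StrictMono t)
    (h0 : t 0 = a) (hl : t (Fin.last n) = b)
    (δ : ℝ) (hδ : ∀ i : Fin n, t i.succ - t i.castSucc ≤ δ) :
    Metric.hausdorffDist ((fun x => pt x (f x)) '' Set.Icc a b)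
        (staircase n t f) ≤ δ + (f a - f b) ∧
    ∀ M : ℝ, (∀ i : Fin n, f (t i.castSucc) - f (t i.succ) ≤ M) →
      Metric.hausdorffDist ((fun x => pt x (f x)) '' Set.Icc a b)
        (staircase n t f) ≤ δ + M := by
  have hmem : ∀ j : Fin (n+1), t j ∈ Set.Icc a b := fun j =>
    ⟨h0 ▸ ht.monotone (Fin.zero_le j), hl ▸ ht.monotone (Fin.le_last j)⟩
  constructor
  · refine key a b hab f hf n hn t ht h0 hl δ hδ (f a - f b) (fun i => ?_)
    have h1 : f (t i.castSucc) ≤ f a := by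
      have := hf (Set.left_mem_Icc.mpr hab.le) (hmem i.castSucc) (hmem i.castSucc).1
      exact this
    have h2 : f b ≤ f (t i.succ) := hf (hmem i.succ) (Set.right_mem_Icc.mpr hab.le)
      (hmem i.succ).2
    linarith
  · exact fun M hM => key a b hab f hf n hn t ht h0 hl δ hδ M hM
end
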